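/- (Theorem 1, part 1: convergence of the augmented Lagrangian values) Consider the ADMM iteration for the sparse array beamforming problem, where R_x is Hermitian positive definite with λ_min(R_x) > 0, and suppose the augmented Lagrangian parameter satisfies ρ ≥ max{ 2√2 · λ_max(R_x), 2λ_max²(R_x)/λ_min(R_x) }. Then the real-valued objective function value sequence { L(w_k, v_k, u_k) }_{k ≥ 1} generated by the algorithm converges (to a finite limit). -/

import Mathlib

open scoped ComplexOrder

/-- Action of an `M×M` complex matrix on `ℂ^M` (Euclidean space). -/
noncomputable def mulVecE {M : ℕ} (A : Matrix (Fin M) (Fin M) ℂ)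
    (x : EuclideanSpace ℂ (Fin M)) : EuclideanSpace ℂ (Fin M) :=
  WithLp.toLp 2 (fun i => ∑ j, A i j * x j)

/-- Augmented Lagrangian `L(w,v,u) = λ‖w‖₁ + vᴴR_x v + (ρ/2)(‖w−v+u‖₂² − ‖u‖₂²)`. -/
noncomputable def lagr {M : ℕ} (Rx : Matrix (Fin M) (Fin M) ℂ) (lam ρ : ℝ)
    (w v u : EuclideanSpace ℂ (Fin M)) : ℝ :=
  lam * ∑ i, ‖w i‖ + (inner ℂ v (mulVecE Rx v) : ℂ).re
    + ρ / 2 * (‖w - v + u‖ ^ 2 - ‖u‖ ^ 2)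

namespace AdmmAux

lemma mulVecE_eq {M : ℕ} (A : Matrix (Fin M) (Fin M) ℂ) (x : EuclideanSpace ℂ (Fin M)) :
    mulVecE A x = Matrix.toEuclideanLin A x := rfl

lemma mulVecE_eq' {M : ℕ} (A : Matrix (Fin M) (Fin M) ℂ) (x : EuclideanSpace ℂ (Fin M)) :
    mulVecE A x = WithLp.toLp 2 (A.mulVec (WithLp.ofLp x)) := rfl

lemma mulVecE_add {M : ℕ} (A : Matrix (Fin M) (Fin M) ℂ) (x y : EuclideanSpace ℂ (Fin M)) :
    mulVecE A (x + y) = mulVecE A x + mulVecE A y := by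
  simp [mulVecE_eq, map_add]

lemma mulVecE_sub {M : ℕ} (A : Matrix (Fin M) (Fin M) ℂ) (x y : EuclideanSpace ℂ (Fin M)) :
    mulVecE A (x - y) = mulVecE A x - mulVecE A y := by
  simp [mulVecE_eq, map_sub]

lemma mulVecE_smul {M : ℕ} (A : Matrix (Fin M) (Fin M) ℂ) (c : ℂ) (x : EuclideanSpace ℂ (Fin M)) :
    mulVecE A (c • x) = c • mulVecE A x := by
  simp [mulVecE_eq, map_smul]

lemma mulVecE_mulVecE {M : ℕ} (A B : Matrix (Fin M) (Fin M) ℂ) (x : EuclideanSpace ℂ (Fin M)) :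
    mulVecE A (mulVecE B x) = mulVecE (A * B) x := by
  simp only [mulVecE_eq', WithLp.ofLp_toLp, Matrix.mulVec_mulVec]

lemma mulVecE_symm {M : ℕ} {A : Matrix (Fin M) (Fin M) ℂ} (hA : A.IsHermitian)
    (x y : EuclideanSpace ℂ (Fin M)) :
    inner ℂ (mulVecE A x) y = (inner ℂ x (mulVecE A y) : ℂ) :=
  (Matrix.isHermitian_iff_isSymmetric.1 hA) x y

lemma repr_mulVecE {M : ℕ} {A : Matrix (Fin M) (Fin M) ℂ} (hA : A.IsHermitian)
    (x : EuclideanSpace ℂ (Fin M)) (i : Fin M) :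
    hA.eigenvectorBasis.repr (mulVecE A x) i
      = (hA.eigenvalues i : ℂ) * hA.eigenvectorBasis.repr x i := by
  rw [OrthonormalBasis.repr_apply_apply, OrthonormalBasis.repr_apply_apply,
    ← mulVecE_symm hA]
  have h : mulVecE A (hA.eigenvectorBasis i) = (hA.eigenvalues i : ℝ) • hA.eigenvectorBasis i := by
    have := hA.mulVec_eigenvectorBasis i
    ext j
    exact congrFun this j
  rw [h, RCLike.real_smul_eq_coe_smul (K := ℂ), inner_smul_left]
  simp

lemma re_term (μ : ℝ) (c : ℂ) : ((starRingEnd ℂ) c * ((μ:ℂ) * c)).re = μ * ‖c‖^2 := by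
  rw [mul_left_comm, Complex.conj_mul']
  push_cast
  rw [← Complex.ofReal_pow, ← Complex.ofReal_mul, Complex.ofReal_re]

lemma inner_mulVecE_self_re {M : ℕ} {A : Matrix (Fin M) (Fin M) ℂ} (hA : A.IsHermitian)
    (x : EuclideanSpace ℂ (Fin M)) :
    (inner ℂ x (mulVecE A x) : ℂ).re
      = ∑ i, hA.eigenvalues i * ‖hA.eigenvectorBasis.repr x i‖ ^ 2 := by
  rw [← hA.eigenvectorBasis.repr.inner_map_map x (mulVecE A x), PiLp.inner_apply,
    Complex.re_sum]
  refine Finset.sum_congr rfl fun i _ => ?_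
  rw [repr_mulVecE hA, RCLike.inner_apply, mul_comm _ ((starRingEnd ℂ) _), re_term]

lemma norm_sq_repr {M : ℕ} (b : OrthonormalBasis (Fin M) ℂ (EuclideanSpace ℂ (Fin M)))
    (x : EuclideanSpace ℂ (Fin M)) : ‖x‖ ^ 2 = ∑ i, ‖b.repr x i‖ ^ 2 := by
  rw [← b.repr.norm_map x, EuclideanSpace.norm_eq, Real.sq_sqrt (by positivity)]

lemma quad_lower {M : ℕ} {A : Matrix (Fin M) (Fin M) ℂ} (hA : A.IsHermitian)
    {lmin : ℝ} (h : ∀ i, lmin ≤ hA.eigenvalues i) (x : EuclideanSpace ℂ (Fin M)) :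
    lmin * ‖x‖ ^ 2 ≤ (inner ℂ x (mulVecE A x) : ℂ).re := by
  rw [inner_mulVecE_self_re hA, norm_sq_repr hA.eigenvectorBasis, Finset.mul_sum]
  exact Finset.sum_le_sum fun i _ =>
    mul_le_mul_of_nonneg_right (h i) (by positivity)

lemma norm_mulVecE_le {M : ℕ} {A : Matrix (Fin M) (Fin M) ℂ} (hA : A.IsHermitian)
    {lmax : ℝ} (hpos : 0 ≤ lmax) (h : ∀ i, |hA.eigenvalues i| ≤ lmax)
    (x : EuclideanSpace ℂ (Fin M)) :
    ‖mulVecE A x‖ ≤ lmax * ‖x‖ := by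
  have hsq : ‖mulVecE A x‖ ^ 2 ≤ (lmax * ‖x‖) ^ 2 := by
    rw [norm_sq_repr hA.eigenvectorBasis, mul_pow, norm_sq_repr hA.eigenvectorBasis x,
      Finset.mul_sum]
    refine Finset.sum_le_sum fun i _ => ?_
    rw [repr_mulVecE hA, norm_mul, mul_pow, Complex.norm_real, Real.norm_eq_abs]
    exact mul_le_mul_of_nonneg_right (by nlinarith [h i, abs_nonneg (hA.eigenvalues i)])
      (by positivity)
  have h1 : (0:ℝ) ≤ ‖mulVecE A x‖ := norm_nonneg _
  have h2 : (0:ℝ) ≤ lmax * ‖x‖ := by positivity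
  nlinarith

end AdmmAux

set_option maxHeartbeats 1600000 in
open AdmmAux in
/-- Theorem 1, part 1: If `R_x ≻ 0` and
`ρ ≥ max{2√2·λ_max(R_x), 2λ_max²(R_x)/λ_min(R_x)}`, then the augmented Lagrangian value
sequence generated by the ADMM iteration converges to a finite limit. -/
theorem admm_lagrangian_converges
    {M : ℕ} (lam ρ : ℝ) (hlam : 0 < lam) (hρ : 0 < ρ)
    (Rx : Matrix (Fin M) (Fin M) ℂ) (hRx : Rx.PosDef)
    (a0 : EuclideanSpace ℂ (Fin M)) (ha0 : a0 ≠ 0)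
    (lmax lmin : ℝ)
    (hlmax : IsGreatest (Set.range hRx.posSemidef.1.eigenvalues) lmax)
    (hlmin : IsLeast (Set.range hRx.posSemidef.1.eigenvalues) lmin)
    (hlmin_pos : 0 < lmin)
    (hρ_big : max (2 * Real.sqrt 2 * lmax) (2 * lmax ^ 2 / lmin) ≤ ρ)
    (w v u : ℕ → EuclideanSpace ℂ (Fin M))
    (hw : ∀ k : ℕ, 1 ≤ ‖(inner ℂ a0 (w (k + 1)) : ℂ)‖ ^ 2 ∧
      ∀ x : EuclideanSpace ℂ (Fin M), 1 ≤ ‖(inner ℂ a0 x : ℂ)‖ ^ 2 →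
        lam * ∑ i, ‖w (k + 1) i‖ + ρ / 2 * ‖w (k + 1) - v k + u k‖ ^ 2 ≤
        lam * ∑ i, ‖x i‖ + ρ / 2 * ‖x - v k + u k‖ ^ 2)
    (hv : ∀ k : ℕ, v (k + 1) = (ρ : ℂ) • mulVecE (2 • Rx + (ρ : ℂ) • 1)⁻¹ (w (k + 1) + u k))
    (hu : ∀ k : ℕ, u (k + 1) = u k + w (k + 1) - v (k + 1)) :
    ∃ l : ℝ, Filter.Tendsto (fun k : ℕ => lagr Rx lam ρ (w k) (v k) (u k))
      Filter.atTop (nhds l) := by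
  classical
  set hH : Rx.IsHermitian := hRx.posSemidef.1 with hHdef
  set μ : Fin M → ℝ := hH.eigenvalues with hμdef
  set L : ℕ → ℝ := fun k => lagr Rx lam ρ (w k) (v k) (u k) with hLdef
  have hμmin : ∀ i, lmin ≤ μ i := fun i => hlmin.2 ⟨i, rfl⟩
  have hμmax : ∀ i, μ i ≤ lmax := fun i => hlmax.2 ⟨i, rfl⟩
  have hminmax : lmin ≤ lmax := hlmax.2 hlmin.1
  have hlmax_pos : 0 < lmax := lt_of_lt_of_le hlmin_pos hminmax
  have hρ1 : 2 * Real.sqrt 2 * lmax ≤ ρ := le_trans (le_max_left _ _) hρ_big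
  have hρ2 : 2 * lmax ^ 2 / lmin ≤ ρ := le_trans (le_max_right _ _) hρ_big
  have hsqrt2 : (1:ℝ) ≤ Real.sqrt 2 := by
    rw [show (1:ℝ) = Real.sqrt 1 from (Real.sqrt_one).symm]
    exact Real.sqrt_le_sqrt (by norm_num)
  have key2 : lmin ≤ ρ / 2 := by nlinarith
  have hbase : 2 * lmax ^ 2 ≤ ρ * lmin := by
    rw [div_le_iff₀ hlmin_pos] at hρ2; nlinarith
  have key3 : 2 * lmax ^ 2 / ρ ≤ lmin := by
    rw [div_le_iff₀ hρ]; linarith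
  have key1 : 4 * lmax ^ 2 / ρ ≤ 2 * lmin := by
    rw [div_le_iff₀ hρ]; linarith
  -- operator bounds
  have hquad : ∀ x : EuclideanSpace ℂ (Fin M),
      lmin * ‖x‖ ^ 2 ≤ (inner ℂ x (mulVecE Rx x) : ℂ).re := fun x => quad_lower hH hμmin x
  have hopn : ∀ x : EuclideanSpace ℂ (Fin M), ‖mulVecE Rx x‖ ≤ lmax * ‖x‖ := by
    intro x
    refine norm_mulVecE_le hH hlmax_pos.le (fun i => ?_) x
    rw [abs_le]
    exact ⟨le_trans (by linarith) (hμmin i), hμmax i⟩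
  -- the matrix B = 2Rx + ρI is invertible
  set Bmat : Matrix (Fin M) (Fin M) ℂ := 2 • Rx + (ρ : ℂ) • 1 with hBdef
  have hBpos : Bmat.PosDef := by
    have h2 : (2 • Rx : Matrix (Fin M) (Fin M) ℂ).PosDef := by
      have h22 : (2 • Rx : Matrix (Fin M) (Fin M) ℂ) = Rx + Rx := by ext i j; simp [two_mul]
      rw [h22]; exact hRx.add hRx
    have hI : ((ρ : ℂ) • (1 : Matrix (Fin M) (Fin M) ℂ)).PosDef := by
      rw [Matrix.smul_one_eq_diagonal]
      exact Matrix.PosDef.diagonal fun i => by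
        simpa using (Complex.zero_lt_real (x := ρ)).2 hρ
    exact h2.add hI
  have hBunit : IsUnit Bmat.det := hBpos.det_pos.ne'.isUnit
  -- stationarity: B v_{k+1} = ρ (w_{k+1} + u_k)
  have hstat : ∀ k, mulVecE Bmat (v (k + 1)) = (ρ : ℂ) • (w (k + 1) + u k) := by
    intro k
    rw [hv k, mulVecE_smul, mulVecE_mulVecE, Matrix.mul_nonsing_inv _ hBunit]
    congr 1
    rw [mulVecE_eq', Matrix.one_mulVec]
  have hBact : ∀ y : EuclideanSpace ℂ (Fin M),
      mulVecE Bmat y = (2 : ℂ) • mulVecE Rx y + (ρ : ℂ) • y := by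
    intro y
    rw [hBdef]
    have : (2 • Rx : Matrix (Fin M) (Fin M) ℂ) = (2 : ℂ) • Rx := by
      ext i j; simp
    rw [mulVecE_eq', Matrix.add_mulVec, this, Matrix.smul_mulVec,
      Matrix.smul_mulVec, Matrix.one_mulVec]
    rfl
  have hstat2 : ∀ k, (2 : ℂ) • mulVecE Rx (v (k + 1))
      = (ρ : ℂ) • (w (k + 1) - v (k + 1) + u k) := by
    intro k
    have h := hstat k
    rw [hBact] at h
    have : (ρ : ℂ) • (w (k + 1) - v (k + 1) + u k)
        = (ρ : ℂ) • (w (k + 1) + u k) - (ρ : ℂ) • v (k + 1) := by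
      rw [← smul_sub]; congr 1; abel
    rw [this, ← h]; abel
  -- ρ u_{k+1} = 2 Rx v_{k+1}
  have hru : ∀ k, (ρ : ℂ) • u (k + 1) = (2 : ℂ) • mulVecE Rx (v (k + 1)) := by
    intro k
    rw [hstat2 k, hu k]
    congr 1; abel
  -- norm bound on u differences
  have hnormdu : ∀ k, ρ * ‖u (k + 2) - u (k + 1)‖ ≤ 2 * lmax * ‖v (k + 2) - v (k + 1)‖ := by
    intro k
    have h : (ρ : ℂ) • (u (k + 2) - u (k + 1))
        = (2 : ℂ) • mulVecE Rx (v (k + 2) - v (k + 1)) := by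
      rw [smul_sub, hru (k + 1), hru k, mulVecE_sub, smul_sub]
    have h2 := congrArg norm h
    rw [norm_smul, norm_smul] at h2
    simp only [Complex.norm_real, Real.norm_eq_abs, abs_of_pos hρ, Complex.norm_ofNat] at h2
    calc ρ * ‖u (k + 2) - u (k + 1)‖ = 2 * ‖mulVecE Rx (v (k + 2) - v (k + 1))‖ := h2
      _ ≤ 2 * (lmax * ‖v (k + 2) - v (k + 1)‖) := by
          have := hopn (v (k + 2) - v (k + 1)); linarith
      _ = 2 * lmax * ‖v (k + 2) - v (k + 1)‖ := by ring
  -- (1) w-step decrease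
  have hwstep : ∀ k, lagr Rx lam ρ (w (k + 2)) (v (k + 1)) (u (k + 1))
      ≤ lagr Rx lam ρ (w (k + 1)) (v (k + 1)) (u (k + 1)) := by
    intro k
    have h := (hw (k + 1)).2 (w (k + 1)) (hw k).1
    unfold lagr
    linarith
  -- (2) v-step decrease
  have hvstep : ∀ k, lagr Rx lam ρ (w (k + 2)) (v (k + 2)) (u (k + 1))
      + (lmin + ρ / 2) * ‖v (k + 2) - v (k + 1)‖ ^ 2
      ≤ lagr Rx lam ρ (w (k + 2)) (v (k + 1)) (u (k + 1)) := by
    intro k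
    set W := w (k + 2) with hW
    set U := u (k + 1) with hU
    set v' := v (k + 2) with hv'
    set vk := v (k + 1) with hvk
    set d : EuclideanSpace ℂ (Fin M) := vk - v' with hd
    have hvkd : vk = v' + d := by rw [hd]; abel
    -- expansion of the quadratic form
    have e1 : (inner ℂ vk (mulVecE Rx vk) : ℂ)
        = inner ℂ v' (mulVecE Rx v') + inner ℂ v' (mulVecE Rx d)
          + (inner ℂ d (mulVecE Rx v') + inner ℂ d (mulVecE Rx d)) := by
      rw [hvkd, mulVecE_add, inner_add_left, inner_add_right, inner_add_right]
    have e2 : (inner ℂ v' (mulVecE Rx d) : ℂ).re = (inner ℂ d (mulVecE Rx v') : ℂ).re := by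
      rw [← mulVecE_symm hH v' d, ← inner_conj_symm]
      exact Complex.conj_re _
    have e3 : (inner ℂ vk (mulVecE Rx vk) : ℂ).re
        = (inner ℂ v' (mulVecE Rx v') : ℂ).re + 2 * (inner ℂ d (mulVecE Rx v') : ℂ).re
          + (inner ℂ d (mulVecE Rx d) : ℂ).re := by
      rw [e1]; simp only [Complex.add_re]; rw [e2]; ring
    -- expansion of the norm term
    have e4 : W - vk + U = (W - v' + U) - d := by rw [hvkd]; abel
    have e5 : ‖W - vk + U‖ ^ 2
        = ‖W - v' + U‖ ^ 2 - 2 * (inner ℂ (W - v' + U) d : ℂ).re + ‖d‖ ^ 2 := by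
      rw [e4]
      exact norm_sub_sq (𝕜 := ℂ) _ _
    -- stationarity
    have e6 : (2 : ℂ) • mulVecE Rx v' = (ρ : ℂ) • (W - v' + U) := hstat2 (k + 1)
    have e7 : 2 * (inner ℂ d (mulVecE Rx v') : ℂ).re = ρ * (inner ℂ d (W - v' + U) : ℂ).re := by
      have := congrArg (fun z : EuclideanSpace ℂ (Fin M) => (inner ℂ d z : ℂ).re) e6
      simp only [inner_smul_right] at this
      rw [Complex.mul_re, Complex.mul_re] at this
      simp at this; exact this
    have e8 : (inner ℂ (W - v' + U) d : ℂ).re = (inner ℂ d (W - v' + U) : ℂ).re := by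
      rw [← inner_conj_symm]; exact Complex.conj_re _
    have e9 : lmin * ‖d‖ ^ 2 ≤ (inner ℂ d (mulVecE Rx d) : ℂ).re := hquad d
    have e10 : ‖v' - vk‖ = ‖d‖ := by rw [hd, norm_sub_rev]
    have e11 : ‖v' - vk‖ ^ 2 = ‖d‖ ^ 2 := by rw [e10]
    unfold lagr
    rw [e11]
    have keyid : lam * ∑ i, ‖W i‖ + (inner ℂ vk (mulVecE Rx vk) : ℂ).re
        + ρ / 2 * (‖W - vk + U‖ ^ 2 - ‖U‖ ^ 2)
      = lam * ∑ i, ‖W i‖ + (inner ℂ v' (mulVecE Rx v') : ℂ).re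
        + ρ / 2 * (‖W - v' + U‖ ^ 2 - ‖U‖ ^ 2)
        + ((inner ℂ d (mulVecE Rx d) : ℂ).re + ρ / 2 * ‖d‖ ^ 2) := by
      linear_combination e3 + ρ / 2 * e5 + e7 - ρ * e8
    linarith [e9, keyid]
  -- (3) u-step identity
  have hustep : ∀ k, lagr Rx lam ρ (w (k + 2)) (v (k + 2)) (u (k + 2))
      = lagr Rx lam ρ (w (k + 2)) (v (k + 2)) (u (k + 1))
        + ρ * ‖u (k + 2) - u (k + 1)‖ ^ 2 := by
    intro k
    set W := w (k + 2)
    set v' := v (k + 2)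
    set e : EuclideanSpace ℂ (Fin M) := u (k + 2) - u (k + 1) with he
    have h1 : W - v' = e := by rw [he, hu (k + 1)]; abel
    have h2 : W - v' + u (k + 1) = u (k + 2) := by rw [h1, he]; abel
    have h3 : W - v' + u (k + 2) = u (k + 2) + e := by rw [h1]; abel
    have h4 : ‖u (k + 2) + e‖ ^ 2
        = ‖u (k + 2)‖ ^ 2 + 2 * (inner ℂ (u (k + 2)) e : ℂ).re + ‖e‖ ^ 2 :=
      norm_add_sq (𝕜 := ℂ) _ _
    have h5 : ‖u (k + 1)‖ ^ 2
        = ‖u (k + 2)‖ ^ 2 - 2 * (inner ℂ (u (k + 2)) e : ℂ).re + ‖e‖ ^ 2 := by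
      have : u (k + 1) = u (k + 2) - e := by rw [he]; abel
      rw [this]
      exact norm_sub_sq (𝕜 := ℂ) _ _
    unfold lagr
    rw [h2, h3, h4, h5]
    ring
  -- decrease of L
  have hdec : ∀ k, L (k + 2) ≤ L (k + 1) := by
    intro k
    have hus := hustep k
    have hvs := hvstep k
    have hws := hwstep k
    have hdu := hnormdu k
    set Dv := ‖v (k + 2) - v (k + 1)‖ with hDv
    set Du := ‖u (k + 2) - u (k + 1)‖ with hDu
    have hDu0 : 0 ≤ Du := norm_nonneg _
    have hDv0 : 0 ≤ Dv := norm_nonneg _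
    have hsq' : (ρ * Du) * (ρ * Du) ≤ (2 * lmax * Dv) * (2 * lmax * Dv) :=
      mul_le_mul hdu hdu (by positivity) (by positivity)
    have hsq : ρ * Du ^ 2 ≤ 4 * lmax ^ 2 / ρ * Dv ^ 2 := by
      rw [div_mul_eq_mul_div, le_div_iff₀ hρ]
      nlinarith [hsq']
    have hcoef : 4 * lmax ^ 2 / ρ ≤ lmin + ρ / 2 := by linarith
    have hc2 : 4 * lmax ^ 2 / ρ * Dv ^ 2 ≤ (lmin + ρ / 2) * Dv ^ 2 :=
      mul_le_mul_of_nonneg_right hcoef (by positivity)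
    have hmain : ρ * Du ^ 2 ≤ (lmin + ρ / 2) * Dv ^ 2 := le_trans hsq hc2
    show lagr Rx lam ρ (w (k + 2)) (v (k + 2)) (u (k + 2))
      ≤ lagr Rx lam ρ (w (k + 1)) (v (k + 1)) (u (k + 1))
    linarith [hus, hvs, hws, hmain]
  -- lower bound of L
  have hlb : ∀ k, 0 ≤ L (k + 1) := by
    intro k
    have h1 : 0 ≤ lam * ∑ i, ‖w (k + 1) i‖ := by
      apply mul_nonneg hlam.le
      exact Finset.sum_nonneg fun i _ => norm_nonneg _
    have h2 : lmin * ‖v (k + 1)‖ ^ 2 ≤ (inner ℂ (v (k + 1)) (mulVecE Rx (v (k + 1))) : ℂ).re :=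
      hquad _
    have h3 : ρ * ‖u (k + 1)‖ ≤ 2 * lmax * ‖v (k + 1)‖ := by
      have h := congrArg norm (hru k)
      rw [norm_smul, norm_smul] at h
      simp only [Complex.norm_real, Real.norm_eq_abs, abs_of_pos hρ, Complex.norm_ofNat] at h
      have hb := hopn (v (k + 1))
      calc ρ * ‖u (k + 1)‖ = 2 * ‖mulVecE Rx (v (k + 1))‖ := h
        _ ≤ 2 * (lmax * ‖v (k + 1)‖) := by linarith
        _ = 2 * lmax * ‖v (k + 1)‖ := by ring
    have h4 : ρ / 2 * ‖u (k + 1)‖ ^ 2 ≤ lmin * ‖v (k + 1)‖ ^ 2 := by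
      have hn1 : 0 ≤ ‖u (k + 1)‖ := norm_nonneg _
      have hn2 : 0 ≤ ‖v (k + 1)‖ := norm_nonneg _
      have hsq' : (ρ * ‖u (k + 1)‖) * (ρ * ‖u (k + 1)‖)
          ≤ (2 * lmax * ‖v (k + 1)‖) * (2 * lmax * ‖v (k + 1)‖) :=
        mul_le_mul h3 h3 (by positivity) (by positivity)
      have h6 : ρ * (ρ / 2 * ‖u (k + 1)‖ ^ 2) ≤ ρ * (lmin * ‖v (k + 1)‖ ^ 2) := by
        nlinarith [hsq', mul_nonneg (by linarith : (0:ℝ) ≤ ρ * lmin - 2 * lmax ^ 2)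
          (sq_nonneg ‖v (k + 1)‖)]
      exact le_of_mul_le_mul_left h6 hρ
    have h5 : 0 ≤ ρ / 2 * ‖w (k + 1) - v (k + 1) + u (k + 1)‖ ^ 2 := by positivity
    show (0:ℝ) ≤ lagr Rx lam ρ (w (k + 1)) (v (k + 1)) (u (k + 1))
    unfold lagr
    linarith
  -- conclude
  have hanti : Antitone (fun k => L (k + 1)) := antitone_nat_of_succ_le fun k => hdec k
  have hbdd : BddBelow (Set.range fun k => L (k + 1)) := by
    refine ⟨0, fun x hx => ?_⟩
    obtain ⟨k, rfl⟩ := hx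
    exact hlb k
  have htend := tendsto_atTop_ciInf hanti hbdd
  exact ⟨_, (Filter.tendsto_add_atTop_iff_nat 1).1 htend⟩
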